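/- arXiv:1005.5233 — 2 statements merged into one kernel-verified Lean document; each statement's English description precedes it below -/
import Mathlib

section
/- Consider the flat cylinder M = ℝ × (ℝ/2πℤ) with its standard product metric and the function G(x, θ) = −(1/4π)·log(cosh x − cos θ), defined away from the point (0,0). Then G is harmonic on M ∖ {(0,0)} and its only critical point is (0, π). -/
open Real

/-- The Laplacian of a function on `ℝ × ℝ` (coordinates `(x, θ)` on the universal cover of the
flat cylinder). -/
noncomputable def lapP (f : ℝ × ℝ → ℝ) (p : ℝ × ℝ) : ℝ :=
  fderiv ℝ (fun q => fderiv ℝ f q (1, 0)) p (1, 0) +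
    fderiv ℝ (fun q => fderiv ℝ f q (0, 1)) p (0, 1)

/-- The Green's function of the flat cylinder `ℝ × (ℝ/2πℤ)`, written in the periodic
coordinates of its universal cover. -/
noncomputable def Gcyl : ℝ × ℝ → ℝ :=
  fun p => -(1 / (4 * π)) * Real.log (Real.cosh p.1 - Real.cos p.2)

namespace CylAux

noncomputable def U : ℝ × ℝ → ℝ := fun p => Real.cosh p.1 - Real.cos p.2

noncomputable def cc : ℝ := -(1 / (4 * π))

noncomputable def LU (p : ℝ × ℝ) : ℝ × ℝ →L[ℝ] ℝ :=
  Real.sinh p.1 • ContinuousLinearMap.fst ℝ ℝ ℝ + Real.sin p.2 • ContinuousLinearMap.snd ℝ ℝ ℝ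

lemma hasFDerivAt_U (p : ℝ × ℝ) : HasFDerivAt U (LU p) p := by
  have h1 : HasFDerivAt (fun q : ℝ × ℝ => Real.cosh q.1)
      (Real.sinh p.1 • ContinuousLinearMap.fst ℝ ℝ ℝ) p :=
    (Real.hasDerivAt_cosh p.1).comp_hasFDerivAt p hasFDerivAt_fst
  have h2 : HasFDerivAt (fun q : ℝ × ℝ => Real.cos q.2)
      ((-Real.sin p.2) • ContinuousLinearMap.snd ℝ ℝ ℝ) p :=
    (Real.hasDerivAt_cos p.2).comp_hasFDerivAt p hasFDerivAt_snd
  have h := h1.sub h2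
  refine h.congr_fderiv ?_
  refine ContinuousLinearMap.ext fun v => ?_
  simp [LU]

lemma U_pos {p : ℝ × ℝ} (hp : ¬(p.1 = 0 ∧ ∃ k : ℤ, p.2 = 2 * π * k)) : 0 < U p := by
  rcases eq_or_ne p.1 0 with hx | hx
  · have hc : Real.cos p.2 ≠ 1 := by
      intro h
      rcases (Real.cos_eq_one_iff p.2).mp h with ⟨n, hn⟩
      exact hp ⟨hx, ⟨n, by rw [← hn]; ring⟩⟩
    have hc' : Real.cos p.2 < 1 := lt_of_le_of_ne (Real.cos_le_one _) hc
    have : (1:ℝ) ≤ Real.cosh p.1 := Real.one_le_cosh p.1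
    simp only [U]; linarith
  · have h1 : 1 < Real.cosh p.1 := Real.one_lt_cosh.mpr hx
    have : Real.cos p.2 ≤ 1 := Real.cos_le_one _
    simp only [U]; linarith

lemma hasFDerivAt_Gcyl {p : ℝ × ℝ} (hp : 0 < U p) :
    HasFDerivAt Gcyl ((cc * (U p)⁻¹) • LU p) p := by
  have h := (Real.hasDerivAt_log hp.ne').comp_hasFDerivAt p (hasFDerivAt_U p)
  have h2 := h.const_mul cc
  have hfun : Gcyl = fun q => cc * Real.log (U q) := rfl
  rw [hfun]
  exact h2.congr_fderiv (by rw [smul_smul])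

lemma isOpen_S : IsOpen {q : ℝ × ℝ | 0 < U q} := by
  have hcont : Continuous U :=
    (Real.continuous_cosh.comp continuous_fst).sub (Real.continuous_cos.comp continuous_snd)
  exact isOpen_lt continuous_const hcont

lemma fderiv_Gcyl {p : ℝ × ℝ} (hp : 0 < U p) :
    fderiv ℝ Gcyl p = (cc * (U p)⁻¹) • LU p := (hasFDerivAt_Gcyl hp).fderiv

/-- explicit partial derivative in a given direction -/
lemma hasFDerivAt_partial (a b : ℝ) {p : ℝ × ℝ} (hp : 0 < U p) :
    HasFDerivAt (fun q : ℝ × ℝ => cc * (Real.sinh q.1 * a + Real.sin q.2 * b) * (U q)⁻¹)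
      ((cc * (Real.sinh p.1 * a + Real.sin p.2 * b)) •
          ((-((U p) ^ 2)⁻¹) • LU p) +
        (U p)⁻¹ • ((cc * (Real.cosh p.1 * a)) • ContinuousLinearMap.fst ℝ ℝ ℝ +
          (cc * (Real.cos p.2 * b)) • ContinuousLinearMap.snd ℝ ℝ ℝ)) p := by
  have hA : HasFDerivAt (fun q : ℝ × ℝ => cc * (Real.sinh q.1 * a + Real.sin q.2 * b))
      ((cc * (Real.cosh p.1 * a)) • ContinuousLinearMap.fst ℝ ℝ ℝ +
        (cc * (Real.cos p.2 * b)) • ContinuousLinearMap.snd ℝ ℝ ℝ) p := by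
    have h1 : HasFDerivAt (fun q : ℝ × ℝ => Real.sinh q.1)
        (Real.cosh p.1 • ContinuousLinearMap.fst ℝ ℝ ℝ) p :=
      (Real.hasDerivAt_sinh p.1).comp_hasFDerivAt p hasFDerivAt_fst
    have h2 : HasFDerivAt (fun q : ℝ × ℝ => Real.sin q.2)
        (Real.cos p.2 • ContinuousLinearMap.snd ℝ ℝ ℝ) p :=
      (Real.hasDerivAt_sin p.2).comp_hasFDerivAt p hasFDerivAt_snd
    have h := ((h1.mul_const a).add (h2.mul_const b)).const_mul cc
    refine h.congr_fderiv ?_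
    refine ContinuousLinearMap.ext fun v => ?_
    simp
    ring
  have hB : HasFDerivAt (fun q : ℝ × ℝ => (U q)⁻¹) ((-((U p) ^ 2)⁻¹) • LU p) p :=
    (hasDerivAt_inv hp.ne').comp_hasFDerivAt p (hasFDerivAt_U p)
  exact hA.mul hB

lemma fderiv_Gcyl_dir {p : ℝ × ℝ} (hp : 0 < U p) (v : ℝ × ℝ) :
    fderiv ℝ Gcyl p v = cc * (Real.sinh p.1 * v.1 + Real.sin p.2 * v.2) * (U p)⁻¹ := by
  rw [fderiv_Gcyl hp]
  simp [LU]
  ring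

lemma cc_ne : cc ≠ 0 := by
  simp only [cc, neg_ne_zero]
  positivity

end CylAux

open CylAux in
/-- On the flat cylinder `ℝ × (ℝ/2πℤ)`, the function
`G(x, θ) = −(1/4π) log (cosh x − cos θ)` is harmonic away from the pole `(0, 0)` (i.e. away
from the points `(0, 2πk)` of the universal cover) and its only critical point is `(0, π)`
(i.e. the points `(0, π + 2πk)` of the universal cover). -/
theorem cylinder_green_harmonic_and_critical_point :
    (∀ p : ℝ × ℝ, ¬(p.1 = 0 ∧ ∃ k : ℤ, p.2 = 2 * π * k) → lapP Gcyl p = 0) ∧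
    (∀ p : ℝ × ℝ, ¬(p.1 = 0 ∧ ∃ k : ℤ, p.2 = 2 * π * k) →
      (fderiv ℝ Gcyl p = 0 ↔ p.1 = 0 ∧ ∃ k : ℤ, p.2 = π + 2 * π * k)) := by
  constructor
  · -- harmonicity
    intro p hp
    have hUp := U_pos hp
    have hmem : p ∈ {q : ℝ × ℝ | 0 < U q} := hUp
    have hnhds : {q : ℝ × ℝ | 0 < U q} ∈ nhds p := isOpen_S.mem_nhds hmem
    -- directional derivative functions agree near p with explicit formulas
    have key : ∀ v : ℝ × ℝ,
        fderiv ℝ (fun q => fderiv ℝ Gcyl q v) p =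
          (cc * (Real.sinh p.1 * v.1 + Real.sin p.2 * v.2)) • ((-((U p) ^ 2)⁻¹) • LU p) +
            (U p)⁻¹ • ((cc * (Real.cosh p.1 * v.1)) • ContinuousLinearMap.fst ℝ ℝ ℝ +
              (cc * (Real.cos p.2 * v.2)) • ContinuousLinearMap.snd ℝ ℝ ℝ) := by
      intro v
      have heq : (fun q => fderiv ℝ Gcyl q v) =ᶠ[nhds p]
          (fun q : ℝ × ℝ => cc * (Real.sinh q.1 * v.1 + Real.sin q.2 * v.2) * (U q)⁻¹) := by
        filter_upwards [hnhds] with q hq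
        exact fderiv_Gcyl_dir hq v
      rw [heq.fderiv_eq]
      exact (hasFDerivAt_partial v.1 v.2 hUp).fderiv
    have h1 := congrFun (congrArg DFunLike.coe (key (1, 0))) (1, 0)
    have h2 := congrFun (congrArg DFunLike.coe (key (0, 1))) (0, 1)
    simp only [LU] at h1 h2
    simp at h1 h2
    rw [lapP, h1, h2]
    have hcosh := Real.cosh_sq p.1
    have hsin := Real.sin_sq_add_cos_sq p.2
    have hU : U p = Real.cosh p.1 - Real.cos p.2 := rfl
    have hUne : U p ≠ 0 := hUp.ne'
    have hbr : Real.sinh p.1 ^ 2 + Real.sin p.2 ^ 2 = U p * (Real.cosh p.1 + Real.cos p.2) := by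
      rw [hU]; nlinarith
    have hinv : (U p)⁻¹ = U p * (U p ^ 2)⁻¹ := by
      field_simp
    rw [hinv]
    linear_combination (-(cc * (U p ^ 2)⁻¹)) * hbr
  · -- critical points
    intro p hp
    have hUp := U_pos hp
    constructor
    · intro h0
      have h1 : fderiv ℝ Gcyl p (1, 0) = 0 := by rw [h0]; rfl
      have h2 : fderiv ℝ Gcyl p (0, 1) = 0 := by rw [h0]; rfl
      rw [fderiv_Gcyl_dir hUp] at h1 h2
      simp at h1 h2
      have hx : p.1 = 0 := by
        rcases h1 with (h | h) | h
        exacts [absurd h cc_ne, h, absurd h hUp.ne']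
      have hsin : Real.sin p.2 = 0 := by
        rcases h2 with (h | h) | h
        exacts [absurd h cc_ne, h, absurd h hUp.ne']
      rcases Real.sin_eq_zero_iff.mp hsin with ⟨n, hn⟩
      refine ⟨hx, ?_⟩
      rcases Int.even_or_odd n with ⟨m, hm⟩ | ⟨m, hm⟩
      · exfalso
        exact hp ⟨hx, ⟨m, by rw [← hn, hm]; push_cast; ring⟩⟩
      · exact ⟨m, by rw [← hn, hm]; push_cast; ring⟩
    · rintro ⟨hx, k, hθ⟩
      have hsinh : Real.sinh p.1 = 0 := by rw [hx, Real.sinh_zero]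
      have hsin : Real.sin p.2 = 0 := by
        apply Real.sin_eq_zero_iff.mpr
        exact ⟨2 * k + 1, by rw [hθ]; push_cast; ring⟩
      rw [fderiv_Gcyl hUp]
      have : LU p = 0 := by
        refine ContinuousLinearMap.ext fun v => ?_
        simp [LU, hsinh, hsin]
      rw [this, smul_zero]
end

section
/- The function f(x₁, x₂, x₃) = x₁² − x₂² + (x₁² + x₂²)·x₃ − (2/3)·x₃³ is harmonic on ℝ³, the origin is a critical point of f, and the lowest-degree nonzero homogeneous term of f at the origin is P(x) = x₁² − x₂², whose critical set is the line {x₁ = x₂ = 0} (so the origin is not an isolated critical point of P). -/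
/-- The Euclidean Laplacian of a function on `ℝⁿ`. -/
noncomputable def lap {n : ℕ} (f : EuclideanSpace ℝ (Fin n) → ℝ)
    (x : EuclideanSpace ℝ (Fin n)) : ℝ :=
  ∑ i, fderiv ℝ (fun y => fderiv ℝ f y (EuclideanSpace.single i 1)) x
    (EuclideanSpace.single i 1)

namespace CuspExample

abbrev E := EuclideanSpace ℝ (Fin 3)

lemma hasF_proj (i : Fin 3) (y : E) :
    HasFDerivAt (fun x : E => x i) (EuclideanSpace.proj i : E →L[ℝ] ℝ) y := by
  exact (EuclideanSpace.proj i : E →L[ℝ] ℝ).hasFDerivAt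

lemma fderiv_f_apply (y v : E) :
    fderiv ℝ (fun x : E =>
        x 0 ^ 2 - x 1 ^ 2 + (x 0 ^ 2 + x 1 ^ 2) * x 2 - 2 / 3 * x 2 ^ 3) y v =
      (2 * y 0 + 2 * y 0 * y 2) * v 0 + (-(2 * y 1) + 2 * y 1 * y 2) * v 1 +
        (y 0 ^ 2 + y 1 ^ 2 - 2 * y 2 ^ 2) * v 2 := by
  have efn : (fun x : E =>
      x 0 ^ 2 - x 1 ^ 2 + (x 0 ^ 2 + x 1 ^ 2) * x 2 - 2 / 3 * x 2 ^ 3) =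
      (fun x : E => x 0 * x 0 - x 1 * x 1 + (x 0 * x 0 + x 1 * x 1) * x 2
        - 2 / 3 * (x 2 * (x 2 * x 2))) := by
    funext x; ring
  rw [efn]
  have h0 := hasF_proj 0 y
  have h1 := hasF_proj 1 y
  have h2 := hasF_proj 2 y
  have h := (((h0.mul h0).sub (h1.mul h1)).add
      (((h0.mul h0).add (h1.mul h1)).mul h2)).sub
      ((h2.mul (h2.mul h2)).const_mul (2/3))
  erw [h.fderiv]
  simp only [ContinuousLinearMap.add_apply, ContinuousLinearMap.sub_apply,
    ContinuousLinearMap.smul_apply, ContinuousLinearMap.coe_smul', Pi.smul_apply,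
    PiLp.proj_apply, smul_eq_mul, Pi.mul_apply, Pi.add_apply]
  ring

lemma fderiv_P_apply (y v : E) :
    fderiv ℝ (fun x : E => x 0 ^ 2 - x 1 ^ 2) y v =
      2 * y 0 * v 0 - 2 * y 1 * v 1 := by
  have efn : (fun x : E => x 0 ^ 2 - x 1 ^ 2) =
      (fun x : E => x 0 * x 0 - x 1 * x 1) := by funext x; ring
  rw [efn]
  have h0 := hasF_proj 0 y
  have h1 := hasF_proj 1 y
  have h := (h0.mul h0).sub (h1.mul h1)
  erw [h.fderiv]
  simp only [ContinuousLinearMap.sub_apply, ContinuousLinearMap.add_apply,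
    ContinuousLinearMap.smul_apply, PiLp.proj_apply, smul_eq_mul]
  ring

end CuspExample

open CuspExample in
/-- The function `f(x₁,x₂,x₃) = x₁² − x₂² + (x₁² + x₂²)x₃ − (2/3)x₃³` is harmonic on `ℝ³`,
the origin is a critical point of `f`, its lowest-degree nonzero homogeneous term at the
origin is the quadratic `P = x₁² − x₂²` (the remainder being homogeneous of degree 3), and the
critical set of `P` is the line `{x₁ = x₂ = 0}`, so the origin is not an isolated critical
point of `P`. -/
theorem cusp_example_harmonic :
    let f : EuclideanSpace ℝ (Fin 3) → ℝ := fun x =>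
      x 0 ^ 2 - x 1 ^ 2 + (x 0 ^ 2 + x 1 ^ 2) * x 2 - 2 / 3 * x 2 ^ 3
    let P : EuclideanSpace ℝ (Fin 3) → ℝ := fun x => x 0 ^ 2 - x 1 ^ 2
    let R : EuclideanSpace ℝ (Fin 3) → ℝ := fun x =>
      (x 0 ^ 2 + x 1 ^ 2) * x 2 - 2 / 3 * x 2 ^ 3
    (∀ x, lap f x = 0) ∧
    fderiv ℝ f 0 = 0 ∧
    (∀ x, f x = P x + R x) ∧
    (∀ (t : ℝ) (x : EuclideanSpace ℝ (Fin 3)), R (t • x) = t ^ 3 * R x) ∧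
    {x : EuclideanSpace ℝ (Fin 3) | fderiv ℝ P x = 0} =
      {x : EuclideanSpace ℝ (Fin 3) | x 0 = 0 ∧ x 1 = 0} := by
  intro f P R
  have key : ∀ y v : E, fderiv ℝ f y v =
      (2 * y 0 + 2 * y 0 * y 2) * v 0 + (-(2 * y 1) + 2 * y 1 * y 2) * v 1 +
        (y 0 ^ 2 + y 1 ^ 2 - 2 * y 2 ^ 2) * v 2 := fderiv_f_apply
  have keyP : ∀ y v : E, fderiv ℝ P y v = 2 * y 0 * v 0 - 2 * y 1 * v 1 :=
    fderiv_P_apply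
  refine ⟨?_, ?_, ?_, ?_, ?_⟩
  · -- harmonic
    intro x
    have e0 : (fun y : E => fderiv ℝ f y (EuclideanSpace.single 0 1)) =
        (fun y : E => 2 * y 0 + 2 * (y 0 * y 2)) := by
      funext y; rw [key]; simp [EuclideanSpace.single_apply]; try ring
    have e1 : (fun y : E => fderiv ℝ f y (EuclideanSpace.single 1 1)) =
        (fun y : E => -(2 * y 1) + 2 * (y 1 * y 2)) := by
      funext y; rw [key]; simp [EuclideanSpace.single_apply]; try ring
    have e2 : (fun y : E => fderiv ℝ f y (EuclideanSpace.single 2 1)) =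
        (fun y : E => y 0 * y 0 + y 1 * y 1 - 2 * (y 2 * y 2)) := by
      funext y; rw [key]; simp [EuclideanSpace.single_apply]; try ring
    have h0x := hasF_proj 0 x
    have h1x := hasF_proj 1 x
    have h2x := hasF_proj 2 x
    have d0 := (h0x.const_mul 2).add ((h0x.mul h2x).const_mul 2)
    have d1 := ((h1x.const_mul 2).neg).add ((h1x.mul h2x).const_mul 2)
    have d2 := ((h0x.mul h0x).add (h1x.mul h1x)).sub ((h2x.mul h2x).const_mul 2)
    rw [lap, Fin.sum_univ_three, e0, e1, e2]
    erw [d0.fderiv, d1.fderiv, d2.fderiv]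
    simp only [ContinuousLinearMap.add_apply, ContinuousLinearMap.sub_apply,
      ContinuousLinearMap.neg_apply, ContinuousLinearMap.smul_apply,
      ContinuousLinearMap.coe_smul', Pi.smul_apply,
      PiLp.proj_apply, smul_eq_mul, EuclideanSpace.single_apply, Pi.mul_apply, Pi.add_apply]
    norm_num [show (2:Fin 3) ≠ 0 by decide, show (2:Fin 3) ≠ 1 by decide,
      show (0:Fin 3) ≠ 2 by decide, show (1:Fin 3) ≠ 2 by decide]
    ring
  · -- critical point at origin
    ext v
    rw [key]
    have h : ∀ i : Fin 3, (0 : E) i = 0 := fun i => rfl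
    simp [h]
  · -- decomposition
    intro x
    show x 0 ^ 2 - x 1 ^ 2 + (x 0 ^ 2 + x 1 ^ 2) * x 2 - 2 / 3 * x 2 ^ 3 =
      (x 0 ^ 2 - x 1 ^ 2) + ((x 0 ^ 2 + x 1 ^ 2) * x 2 - 2 / 3 * x 2 ^ 3)
    ring
  · -- homogeneity of R
    intro t x
    have h : ∀ i : Fin 3, (t • x) i = t * x i := fun i => rfl
    show ((t • x) 0 ^ 2 + (t • x) 1 ^ 2) * (t • x) 2 - 2 / 3 * (t • x) 2 ^ 3 =
      t ^ 3 * ((x 0 ^ 2 + x 1 ^ 2) * x 2 - 2 / 3 * x 2 ^ 3)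
    simp only [h]; ring
  · -- critical set of P
    ext x
    simp only [Set.mem_setOf_eq]
    constructor
    · intro h
      have h0 := congrArg (fun L : E →L[ℝ] ℝ => L (EuclideanSpace.single 0 1)) h
      have h1 := congrArg (fun L : E →L[ℝ] ℝ => L (EuclideanSpace.single 1 1)) h
      simp only [keyP, ContinuousLinearMap.zero_apply,
        EuclideanSpace.single_apply] at h0 h1
      norm_num at h0 h1
      exact ⟨h0, h1⟩
    · rintro ⟨hx0, hx1⟩
      ext v
      rw [keyP]
      simp [hx0, hx1]
end
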